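/- Let v ≥ 2 be an integer, let H = I_v − (1/v)J_v, let a, b, c, e, α be real numbers satisfying b·α² + (a−c)·α − b = 0, and let u ∈ ℝ^v be a vector whose coordinates sum to 0. Then the vector w = (u, α·u) ∈ ℝ^{2v} satisfies C·w = (a + αb)·w, where C is the 2v×2v block matrix C = [[a·H, b·H],[b·H, c·H + e·J_v]]. In particular, if u ≠ 0, then w is an eigenvector of C with eigenvalue a + αb. -/
import Mathlib


open Matrix

/-- If `u` sums to zero and `α` satisfies `bα² + (a-c)α - b = 0`, then
`w = (u, αu)` satisfies `C w = (a + αb) w` for the block matrix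
`C = [[aH, bH], [bH, cH + eJ]]`; in particular, if `u ≠ 0` then `w` is an
eigenvector of `C` with eigenvalue `a + αb`. -/
theorem block_information_matrix_eigenvector
    (v : ℕ) (hv : 2 ≤ v) (a b c e α : ℝ)
    (hα : b * α ^ 2 + (a - c) * α - b = 0)
    (H : Matrix (Fin v) (Fin v) ℝ)
    (hH : H = (1 : Matrix (Fin v) (Fin v) ℝ)
      - ((v : ℝ))⁻¹ • Matrix.of (fun _ _ => (1 : ℝ)))
    (C : Matrix (Fin v ⊕ Fin v) (Fin v ⊕ Fin v) ℝ)
    (hC : C = Matrix.fromBlocks (a • H) (b • H) (b • H)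
      (c • H + e • Matrix.of (fun _ _ => (1 : ℝ))))
    (u : Fin v → ℝ) (hu : ∑ i, u i = 0)
    (w : Fin v ⊕ Fin v → ℝ) (hw : w = Sum.elim u (α • u)) :
    C.mulVec w = (a + α * b) • w ∧
      (u ≠ 0 → Module.End.HasEigenvector C.mulVecLin (a + α * b) w) := by
  have hJ : (Matrix.of (fun _ _ => (1:ℝ)) : Matrix (Fin v) (Fin v) ℝ).mulVec u = 0 := by
    funext i
    simp [Matrix.mulVec, dotProduct, hu]
  have hHu : H.mulVec u = u := by
    subst hH
    rw [Matrix.sub_mulVec, Matrix.smul_mulVec, hJ]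
    simp
  have key : C.mulVec w = (a + α * b) • w := by
    subst hC hw
    rw [Matrix.fromBlocks_mulVec]
    simp only [Sum.elim_comp_inl, Sum.elim_comp_inr]
    funext i
    rcases i with i | i
    · simp only [Sum.elim_inl, Sum.elim_inr, Matrix.add_mulVec, Matrix.smul_mulVec,
        Matrix.mulVec_smul, hHu, hJ, Pi.smul_apply, Pi.add_apply, smul_eq_mul,
        Pi.zero_apply, mul_zero, smul_zero, add_zero]
      ring
    · simp only [Sum.elim_inl, Sum.elim_inr, Matrix.add_mulVec, Matrix.smul_mulVec,
        Matrix.mulVec_smul, hHu, hJ, Pi.smul_apply, Pi.add_apply, smul_eq_mul,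
        Pi.zero_apply, mul_zero, smul_zero, add_zero]
      linear_combination (-(u i)) * hα
  refine ⟨key, fun hu0 => ?_⟩
  obtain ⟨i, hi⟩ : ∃ i, u i ≠ 0 := by
    by_contra h
    push_neg at h
    exact hu0 (funext h)
  refine ⟨?_, ?_⟩
  · rw [Module.End.mem_eigenspace_iff, Matrix.mulVecLin_apply, key]
  · intro h
    apply hi
    have := congrFun h (Sum.inl i)
    simpa [hw] using this
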